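/- The vector χ = (β_6 + 2β_7) + (2β_9 + 2β_10 + 2β_11 + 2β_12 + 2β_13 + 2β_14 + β_15 + β_16) in the DE_18 root lattice satisfies (χ|χ) = 2 and (χ|β_j) = 0 for all j = 9,...,16, and the Gram matrix of {β_{-1}, β_0, β_1, β_2, β_3, β_4, β_5, β_6, β_8, χ} equals the Cartan matrix of DE_10 (with χ playing the role of the node γ_8 attached to β_5, and β_8 the role of γ_7 attached to β_1). -/

import Mathlib

open Finset

/-- Edges of the `DE₁₈` Dynkin diagram. Nodes are indexed `0,…,17`
corresponding to `β₋₁, β₀, …, β₁₆`: a chain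
`β₋₁,β₀,…,β₇,β₉,β₁₀,…,β₁₅` with `β₈` attached to `β₁` and `β₁₆`
attached to `β₁₄`. -/
def DE18Edges : List (ℕ × ℕ) :=
  [(0,1),(1,2),(2,3),(3,4),(4,5),(5,6),(6,7),(7,8),(8,10),(10,11),(11,12),
   (12,13),(13,14),(14,15),(15,16),(2,9),(15,17)]

/-- The `18×18` Cartan matrix `A₁₈` of `DE₁₈`: diagonal entries `2`, entry
`−1` for adjacent nodes of the diagram, `0` otherwise. -/
def A18 : Matrix (Fin 18) (Fin 18) ℤ := fun i j =>
  if i = j then 2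
  else if (i.val, j.val) ∈ DE18Edges ∨ (j.val, i.val) ∈ DE18Edges then -1
  else 0

/-- The `DE₁₈` bilinear form on root-coordinate vectors, determined by the
Cartan matrix: `(x|y) = ∑ᵢⱼ xᵢ (A₁₈)ᵢⱼ yⱼ`. -/
def formDE18 (x y : Fin 18 → ℚ) : ℚ :=
  ∑ i, ∑ j, x i * (A18 i j : ℚ) * y j

/-- The standard basis vector `βₖ` in root coordinates. -/
def beta (k : Fin 18) : Fin 18 → ℚ := fun j => if j = k then 1 else 0

/-- `χ = (β₆ + 2β₇) + (2β₉ + 2β₁₀ + 2β₁₁ + 2β₁₂ + 2β₁₃ + 2β₁₄ + β₁₅ + β₁₆)`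
in root coordinates (indices `β₋₁ = 0,…, β₁₆ = 17`). -/
def chiRoot : Fin 18 → ℚ := ![0,0,0,0,0,0,0,1,2,0,2,2,2,2,2,2,1,1]

/-- The Cartan matrix of `DE₁₀`, nodes ordered `γ₋₁,…,γ₆,γ₇,γ₈`:
a chain `γ₋₁,…,γ₆` with `γ₇` attached to `γ₁` and `γ₈` attached to `γ₅`. -/
def CartanDE10 : Fin 10 → Fin 10 → ℚ := fun i j =>
  if i = j then 2
  else if (i.val + 1 = j.val ∧ j.val ≤ 7) ∨ (j.val + 1 = i.val ∧ i.val ≤ 7) then -1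
  else if (i.val = 2 ∧ j.val = 8) ∨ (i.val = 8 ∧ j.val = 2) then -1
  else if (i.val = 6 ∧ j.val = 9) ∨ (i.val = 9 ∧ j.val = 6) then -1
  else 0

/-- The ten vectors `β₋₁, β₀, β₁, β₂, β₃, β₄, β₅, β₆, β₈, χ` in the `DE₁₀`
node order `γ₋₁,…,γ₆, γ₇, γ₈` (so `β₈` plays the role of `γ₇` attached to
`β₁`, and `χ` plays the role of `γ₈` attached to `β₅`). -/
def de10InDE18 : Fin 10 → (Fin 18 → ℚ) :=
  ![beta 0, beta 1, beta 2, beta 3, beta 4, beta 5, beta 6, beta 7, beta 9,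
    chiRoot]

/-- `(χ|χ) = 2`, `χ` is orthogonal to the `so(16)` simple roots
`β₉,…,β₁₆`, and the Gram matrix of `{β₋₁,…,β₆, β₈, χ}` equals the Cartan
matrix of `DE₁₀`. -/

lemma form_beta_right (x : Fin 18 → ℚ) (k : Fin 18) :
    formDE18 x (beta k) = ∑ i, x i * (A18 i k : ℚ) := by
  simp [formDE18, beta, mul_ite, Finset.sum_ite_eq']

lemma form_beta_left (y : Fin 18 → ℚ) (k : Fin 18) :
    formDE18 (beta k) y = ∑ j, (A18 k j : ℚ) * y j := by
  simp [formDE18, beta, ite_mul, Finset.sum_ite_eq']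

lemma form_beta_beta (k l : Fin 18) :
    formDE18 (beta k) (beta l) = (A18 k l : ℚ) := by
  simp [form_beta_left, beta, mul_ite, Finset.sum_ite_eq']

lemma A18_symm (i j : Fin 18) : A18 i j = A18 j i := by
  revert i j; unfold A18; decide

lemma form_symm (x y : Fin 18 → ℚ) : formDE18 x y = formDE18 y x := by
  rw [formDE18, Finset.sum_comm]
  refine Finset.sum_congr rfl fun j _ => Finset.sum_congr rfl fun i _ => ?_
  rw [A18_symm]; ring

def chiCol : Fin 18 → ℚ := fun k => if k.val = 6 then -1 else if k.val = 8 then 1 else 0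

set_option maxHeartbeats 1000000 in
lemma hcol (k : Fin 18) : formDE18 chiRoot (beta k) = chiCol k := by
  rw [form_beta_right]
  fin_cases k <;>
    (simp only [Fin.sum_univ_succ, Fin.sum_univ_zero]; simp [A18, DE18Edges, chiRoot, chiCol] <;> norm_num)

set_option maxHeartbeats 1000000 in
lemma hchichi : formDE18 chiRoot chiRoot = 2 := by
  simp only [formDE18, Fin.sum_univ_succ, Fin.sum_univ_zero]
  simp [A18, DE18Edges, chiRoot]
  norm_num

lemma hrow (k : Fin 18) : formDE18 (beta k) chiRoot = chiCol k := by
  rw [form_symm]; exact hcol k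

lemma d0 : de10InDE18 0 = beta 0 := rfl
lemma d1 : de10InDE18 1 = beta 1 := rfl
lemma d2 : de10InDE18 2 = beta 2 := rfl
lemma d3 : de10InDE18 3 = beta 3 := rfl
lemma d4 : de10InDE18 4 = beta 4 := rfl
lemma d5 : de10InDE18 5 = beta 5 := rfl
lemma d6 : de10InDE18 6 = beta 6 := rfl
lemma d7 : de10InDE18 7 = beta 7 := rfl
lemma d8 : de10InDE18 8 = beta 9 := rfl
lemma d9 : de10InDE18 9 = chiRoot := rfl

theorem chi_props :
    formDE18 chiRoot chiRoot = 2 ∧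
    (∀ j : Fin 18, 10 ≤ j.val → formDE18 chiRoot (beta j) = 0) ∧
    (∀ a b : Fin 10, formDE18 (de10InDE18 a) (de10InDE18 b) = CartanDE10 a b) := by
  refine ⟨hchichi, ?_, ?_⟩
  · intro j hj
    rw [hcol j]
    fin_cases j <;> first | exact absurd hj (by decide) | norm_num [chiCol]
  · intro a b
    fin_cases a <;> fin_cases b <;>
      simp (config := { decide := true }) [d0, d1, d2, d3, d4, d5, d6, d7, d8, d9,
        form_beta_beta, hchichi, hcol, hrow, chiCol, A18, CartanDE10]
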